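/- Let (δ, R) be a (1−α) P-certified decision and C ∈ [0,1) the cost of the default action. For any adoption rule Q that is a function of Y, the risk satisfies E_P[L(δ_Q(Y), θ)] ≤ α + E_P[Q·R(Y) + (1−Q)·C] for every (θ, P) in the model. In particular, if Q = 1(R(Y) ≤ C), then E_P[L(δ_Q(Y), θ)] ≤ α + E_P[min(R(Y), C)]. -/

import Mathlib

open MeasureTheory Set

private lemma integrable_of_bdd {Y : Type*} [MeasurableSpace Y] {μ : Measure Y}
    [IsProbabilityMeasure μ] {f : Y → ℝ} (hf : Measurable f) {c : ℝ}
    (hb : ∀ y, |f y| ≤ c) : Integrable f μ :=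
  ⟨hf.aestronglyMeasurable, HasFiniteIntegral.of_bounded (C := c) (ae_of_all _ hb)⟩

/-- For a `(1-α)` P-certified decision `(δ, R)` and any `{0,1}`-valued adoption rule `Q`
that is a function of `Y`, the risk satisfies
`E_P[L(δ_Q(Y), θ)] ≤ α + E_P[Q·R(Y) + (1-Q)·C]`; in particular, if `Q = 1(R(Y) ≤ C)` then
`E_P[L(δ_Q(Y), θ)] ≤ α + E_P[min (R(Y), C)]`. -/
theorem statement1
    {Y : Type*} [MeasurableSpace Y] {A : Type*} {Θ : Type*}
    (L : A → Θ → ℝ) (hL : ∀ a θ, L a θ ∈ Icc (0 : ℝ) 1)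
    (α : ℝ) (hα : α ∈ Ioo (0 : ℝ) 1)
    (M : Set (Θ × Measure Y))
    (hMprob : ∀ p ∈ M, IsProbabilityMeasure p.2)
    (δ : Y → A) (R : Y → ℝ) (hR01 : ∀ y, R y ∈ Icc (0 : ℝ) 1)
    (hcert : ∀ p ∈ M, ENNReal.ofReal (1 - α) ≤ p.2 {y | L (δ y) p.1 ≤ R y})
    (C : ℝ) (hC : C ∈ Ico (0 : ℝ) 1)
    (Q : Y → ℝ) (hQ01 : ∀ y, Q y = 0 ∨ Q y = 1)
    (hmeasL : ∀ θ : Θ, Measurable fun y => L (δ y) θ)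
    (hmeasR : Measurable R) (hmeasQ : Measurable Q) :
    (∀ p ∈ M,
      ∫ y, (Q y * L (δ y) p.1 + (1 - Q y) * C) ∂p.2
        ≤ α + ∫ y, (Q y * R y + (1 - Q y) * C) ∂p.2) ∧
    ((∀ y, Q y = if R y ≤ C then 1 else 0) →
      ∀ p ∈ M,
        ∫ y, (Q y * L (δ y) p.1 + (1 - Q y) * C) ∂p.2
          ≤ α + ∫ y, min (R y) C ∂p.2) := by
  have main : ∀ p ∈ M,
      ∫ y, (Q y * L (δ y) p.1 + (1 - Q y) * C) ∂p.2
        ≤ α + ∫ y, (Q y * R y + (1 - Q y) * C) ∂p.2 := by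
    intro p hp
    haveI := hMprob p hp
    set μ := p.2
    set θ := p.1
    set S : Set Y := {y | L (δ y) θ ≤ R y} with hS
    have hSmeas : MeasurableSet S := measurableSet_le (hmeasL θ) hmeasR
    -- measure bound
    have hcompl : μ Sᶜ ≤ ENNReal.ofReal α := by
      have h1 : μ Sᶜ = 1 - μ S := prob_compl_eq_one_sub hSmeas
      have h2 : ENNReal.ofReal (1 - α) ≤ μ S := hcert p hp
      rw [h1]
      calc 1 - μ S ≤ 1 - ENNReal.ofReal (1 - α) := tsub_le_tsub_left h2 1
        _ ≤ ENNReal.ofReal α := by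
          rw [← ENNReal.ofReal_one, ← ENNReal.ofReal_sub _ (by linarith [hα.2] : (0:ℝ) ≤ 1 - α)]
          simp
    have hindint : (μ Sᶜ).toReal ≤ α := by
      refine ENNReal.toReal_le_of_le_ofReal hα.1.le hcompl
    -- pointwise bound
    have hpt : ∀ y, Q y * L (δ y) θ + (1 - Q y) * C
        ≤ (Q y * R y + (1 - Q y) * C) + Sᶜ.indicator (fun _ => (1:ℝ)) y := by
      intro y
      have hind0 : (0:ℝ) ≤ Sᶜ.indicator (fun _ => (1:ℝ)) y :=
        Set.indicator_nonneg (fun _ _ => zero_le_one) y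
      rcases hQ01 y with h | h
      · simp [h]; linarith
      · rcases Classical.em (y ∈ S) with hy | hy
        · have : L (δ y) θ ≤ R y := hy
          nlinarith
        · have hi : Sᶜ.indicator (fun _ => (1:ℝ)) y = 1 := by
            simp [Set.indicator_of_mem, hy]
          rw [h, hi]
          have := (hL (δ y) θ).2
          have := (hR01 y).1
          nlinarith
    -- integrability
    have hintL : Integrable (fun y => Q y * L (δ y) θ + (1 - Q y) * C) μ := by
      refine integrable_of_bdd (((hmeasQ.mul (hmeasL θ)).add
        (((measurable_const.sub hmeasQ)).mul measurable_const))) (c := 2) ?_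
      intro y
      rcases hQ01 y with h | h <;>
        · have h1 := (hL (δ y) θ).1; have h2 := (hL (δ y) θ).2
          have h3 := hC.1; have h4 := hC.2
          simp [h, abs_le]; constructor <;> nlinarith
    have hintR : Integrable (fun y => Q y * R y + (1 - Q y) * C) μ := by
      refine integrable_of_bdd (((hmeasQ.mul hmeasR).add
        (((measurable_const.sub hmeasQ)).mul measurable_const))) (c := 2) ?_
      intro y
      rcases hQ01 y with h | h <;>
        · have h1 := (hR01 y).1; have h2 := (hR01 y).2
          have h3 := hC.1; have h4 := hC.2
          simp [h, abs_le]; constructor <;> nlinarith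
    have hintI : Integrable (Sᶜ.indicator (fun _ => (1:ℝ))) μ :=
      (integrable_const (1:ℝ)).indicator hSmeas.compl
    calc ∫ y, (Q y * L (δ y) θ + (1 - Q y) * C) ∂μ
        ≤ ∫ y, ((Q y * R y + (1 - Q y) * C) + Sᶜ.indicator (fun _ => (1:ℝ)) y) ∂μ :=
          integral_mono hintL (hintR.add hintI) hpt
      _ = (∫ y, (Q y * R y + (1 - Q y) * C) ∂μ) + ∫ y, Sᶜ.indicator (fun _ => (1:ℝ)) y ∂μ :=
          integral_add hintR hintI
      _ ≤ (∫ y, (Q y * R y + (1 - Q y) * C) ∂μ) + α := by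
          have : ∫ y, Sᶜ.indicator (fun _ => (1:ℝ)) y ∂μ = (μ Sᶜ).toReal := by
            rw [integral_indicator hSmeas.compl]
            simp; rfl
          rw [this]; linarith
      _ = α + ∫ y, (Q y * R y + (1 - Q y) * C) ∂μ := by ring
  refine ⟨main, ?_⟩
  intro hQdef p hp
  have h := main p hp
  have heq : ∀ y, Q y * R y + (1 - Q y) * C = min (R y) C := by
    intro y
    rcases Classical.em (R y ≤ C) with hy | hy
    · rw [hQdef y, if_pos hy, min_eq_left hy]; ring
    · rw [hQdef y, if_neg hy, min_eq_right (le_of_not_ge hy)]; ring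
  calc ∫ y, (Q y * L (δ y) p.1 + (1 - Q y) * C) ∂p.2
      ≤ α + ∫ y, (Q y * R y + (1 - Q y) * C) ∂p.2 := h
    _ = α + ∫ y, min (R y) C ∂p.2 := by
        congr 1; exact integral_congr_ae (ae_of_all _ heq)
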